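/- Let α > 1 be real, p ≥ 1 an integer, and set λ_i = i^{-α} for i = 1,…,p. Suppose the real n satisfies p·α/(α − 1)² + α²/(α − 1)² < n < p·(3 + 2^{-α})/(4 + 2^{-(α-2)}), let τ > 0 satisfy Σ_{i=1}^p λ_i/(λ_i + τ) = n, and define Ω by n·Ω = Σ_{i=1}^p (λ_i/(λ_i + τ))². Then Ω > (α − 1)/α − (1/α) · ((n + 1 + (p + 1)/(α − 1))/(p + 1))^{2α − 1} − 1/n. -/

import Mathlib

open MeasureTheory Set Finset

namespace CovStatAux

noncomputable def pf (α τ x : ℝ) : ℝ := 1 / (1 + τ * x ^ α)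

variable {α τ : ℝ}

lemma denom_pos (hτ : 0 < τ) {x : ℝ} (hx : 0 ≤ x) : 0 < 1 + τ * x ^ α := by
  have h := Real.rpow_nonneg hx α
  nlinarith

lemma pf_nonneg (hτ : 0 < τ) {x : ℝ} (hx : 0 ≤ x) : 0 ≤ pf α τ x :=
  div_nonneg zero_le_one (denom_pos hτ hx).le

lemma pf_le_one (hτ : 0 < τ) {x : ℝ} (hx : 0 ≤ x) : pf α τ x ≤ 1 := by
  rw [pf, div_le_one (denom_pos hτ hx)]
  nlinarith [Real.rpow_nonneg hx α, hτ.le]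

lemma pf_anti (hα : 0 < α) (hτ : 0 < τ) : AntitoneOn (pf α τ) (Ici 0) := by
  intro x hx y hy hxy
  have h1 : x ^ α ≤ y ^ α := Real.rpow_le_rpow hx hxy hα.le
  have := denom_pos (α := α) hτ (hx : (0:ℝ) ≤ x)
  exact one_div_le_one_div_of_le this (by nlinarith)

lemma pf_sq_anti (hα : 0 < α) (hτ : 0 < τ) :
    AntitoneOn (fun x => pf α τ x ^ 2) (Ici 0) := by
  intro x hx y hy hxy
  have h := pf_anti hα hτ hx hy hxy
  have h0 : 0 ≤ pf α τ y := pf_nonneg hτ hy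
  simp only []
  exact pow_le_pow_left₀ h0 h 2

lemma pf_continuousOn (hα : 0 < α) (hτ : 0 < τ) : ContinuousOn (pf α τ) (Ici 0) := by
  apply ContinuousOn.div continuousOn_const
  · exact (continuous_const.add (continuous_const.mul
      (Real.continuous_rpow_const hα.le))).continuousOn
  · exact fun x hx => (denom_pos hτ hx).ne'

lemma pf_intervalIntegrable (hα : 0 < α) (hτ : 0 < τ) {a b : ℝ} (ha : 0 ≤ a) (hb : 0 ≤ b) :
    IntervalIntegrable (pf α τ) volume a b := by
  apply ContinuousOn.intervalIntegrable
  refine (pf_continuousOn hα hτ).mono fun x hx => ?_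
  have := hx.1
  simp only [Set.uIcc, Set.mem_Icc] at hx
  exact le_trans (le_min ha hb) hx.1


lemma hasDerivAt_F (hα : 1 < α) (hτ : 0 < τ) {x : ℝ} (hx : 0 < x) :
    HasDerivAt (fun y => y / (1 + τ * y ^ α))
      ((1 - α) * pf α τ x + α * pf α τ x ^ 2) x := by
  have hd : HasDerivAt (fun y : ℝ => 1 + τ * y ^ α) (τ * (α * x ^ (α - 1))) x :=
    ((Real.hasDerivAt_rpow_const (Or.inl hx.ne')).const_mul τ).const_add 1
  have h := (hasDerivAt_id x).div hd (denom_pos hτ hx.le).ne'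
  refine h.congr_deriv ?_
  have hxα : x * x ^ (α - 1) = x ^ α := by
    calc x * x ^ (α - 1) = x ^ (1:ℝ) * x ^ (α - 1) := by rw [Real.rpow_one]
    _ = x ^ (1 + (α - 1)) := (Real.rpow_add hx _ _).symm
    _ = x ^ α := by ring_nf
  have hD : (0:ℝ) < 1 + τ * x ^ α := denom_pos hτ hx.le
  have hrw : id x * (τ * (α * x ^ (α - 1))) = τ * α * x ^ α := by
    rw [id_eq, show x * (τ * (α * x ^ (α - 1))) = τ * α * (x * x ^ (α - 1)) by ring, hxα]
  rw [hrw, pf]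
  field_simp
  ring

lemma integral_identity (hα : 1 < α) (hτ : 0 < τ) {b : ℝ} (hb : 1 ≤ b) :
    (1 - α) * (∫ x in (1:ℝ)..b, pf α τ x) + α * ∫ x in (1:ℝ)..b, pf α τ x ^ 2
      = b / (1 + τ * b ^ α) - 1 / (1 + τ) := by
  have hα0 : (0:ℝ) < α := lt_trans one_pos hα
  have hsub : Set.uIcc (1:ℝ) b ⊆ Set.Ici 0 := fun x hx => by
    rw [Set.uIcc_of_le hb] at hx; exact le_trans zero_le_one hx.1
  have hcont : ContinuousOn (fun x => (1 - α) * pf α τ x + α * pf α τ x ^ 2)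
      (Set.uIcc (1:ℝ) b) := by
    have h1 := (pf_continuousOn hα0 hτ).mono hsub
    exact (h1.const_smul (1 - α)).add ((h1.pow 2).const_smul α)
  have key := intervalIntegral.integral_eq_sub_of_hasDerivAt
    (f := fun y => y / (1 + τ * y ^ α))
    (f' := fun x => (1 - α) * pf α τ x + α * pf α τ x ^ 2) (a := 1) (b := b)
    (fun x hx => hasDerivAt_F hα hτ (lt_of_lt_of_le one_pos
      (by rw [Set.uIcc_of_le hb] at hx; exact hx.1)))
    hcont.intervalIntegrable
  have h1 : IntervalIntegrable (pf α τ) volume 1 b :=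
    (((pf_continuousOn hα0 hτ).mono hsub)).intervalIntegrable
  have h2 : IntervalIntegrable (fun x => pf α τ x ^ 2) volume 1 b :=
    ((((pf_continuousOn hα0 hτ).mono hsub)).pow 2).intervalIntegrable
  rw [intervalIntegral.integral_add (h1.const_mul _) (h2.const_mul _),
    intervalIntegral.integral_const_mul, intervalIntegral.integral_const_mul] at key
  rw [key]
  norm_num [Real.one_rpow]

end CovStatAux


open CovStatAux

/-- Non-asymptotic lower bound on the covariance statistic `Ω` for the
finite-dimensional power-law covariance `λ_i = i^{-α}`, `i = 1,…,p`. -/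
theorem covariance_statistic_nonasymptotic_lower_bound
    (α : ℝ) (hα : 1 < α) (p : ℕ) (hp : 1 ≤ p)
    (n : ℝ)
    (hn1 : (p : ℝ) * α / (α - 1) ^ 2 + α ^ 2 / (α - 1) ^ 2 < n)
    (hn2 : n < (p : ℝ) * ((3 + (2 : ℝ) ^ (-α)) / (4 + (2 : ℝ) ^ (-(α - 2)))))
    (τ : ℝ) (hτ : 0 < τ)
    (hsum : ∑ i ∈ Finset.Icc 1 p, (i : ℝ) ^ (-α) / ((i : ℝ) ^ (-α) + τ) = n)
    (Ω : ℝ)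
    (hΩ : n * Ω = ∑ i ∈ Finset.Icc 1 p, ((i : ℝ) ^ (-α) / ((i : ℝ) ^ (-α) + τ)) ^ 2) :
    Ω > (α - 1) / α
      - (1 / α) * ((n + 1 + ((p : ℝ) + 1) / (α - 1)) / ((p : ℝ) + 1)) ^ (2 * α - 1)
      - 1 / n := by
  have hα0 : (0:ℝ) < α := lt_trans one_pos hα
  have hα1 : (0:ℝ) < α - 1 := by linarith
  have hp0 : (0:ℝ) < (p:ℝ) := by exact_mod_cast Nat.lt_of_lt_of_le Nat.zero_lt_one hp
  have hn0 : 0 < n := by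
    have h1 : 0 < (p:ℝ) * α / (α-1)^2 := by positivity
    have h2 : 0 < α^2/(α-1)^2 := by positivity
    linarith
  -- rewrite sums in terms of pf
  have hterm : ∀ i ∈ Finset.Icc 1 p, (i:ℝ)^(-α)/((i:ℝ)^(-α)+τ) = pf α τ (i:ℝ) := by
    intro i hi
    have hi1 : 1 ≤ i := (Finset.mem_Icc.mp hi).1
    have hi0 : (0:ℝ) < (i:ℝ) := by
      exact_mod_cast Nat.lt_of_lt_of_le Nat.zero_lt_one hi1
    have hA : (0:ℝ) < (i:ℝ) ^ α := Real.rpow_pos_of_pos hi0 α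
    rw [Real.rpow_neg hi0.le, pf]
    rw [div_eq_div_iff (by positivity) (by positivity)]
    field_simp
  have hreindex : ∀ g : ℕ → ℝ, ∑ i ∈ Finset.Icc 1 p, g i
      = ∑ i ∈ Finset.range p, g (1 + i) := by
    intro g
    rw [← Finset.Ico_add_one_right_eq_Icc, Finset.sum_Ico_eq_sum_range]
    simp
  have hsum' : ∑ i ∈ Finset.range p, pf α τ (1 + (i:ℝ)) = n := by
    rw [← hsum, Finset.sum_congr rfl hterm,
      hreindex (fun i => pf α τ (i:ℝ))]
    exact Finset.sum_congr rfl (fun i _ => congrArg (pf α τ) (by push_cast; try ring))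
  have hΩ' : n * Ω = ∑ i ∈ Finset.range p, pf α τ (1 + (i:ℝ)) ^ 2 := by
    rw [hΩ, Finset.sum_congr rfl (fun i hi => by rw [hterm i hi]),
      hreindex (fun i => pf α τ (i:ℝ) ^ 2)]
    exact Finset.sum_congr rfl
      (fun i _ => by rw [show ((1 + i : ℕ) : ℝ) = 1 + (i:ℝ) by push_cast; try ring])
  -- integrals
  set b : ℝ := 1 + (p:ℝ) with hbdef
  have hb : (1:ℝ) ≤ b := by rw [hbdef]; linarith
  have hsub : ∀ c d : ℝ, 0 ≤ c → 0 ≤ d → Set.uIcc c d ⊆ Set.Ici 0 := by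
    intro c d hc hd x hx
    have := hx.1
    simp only [Set.uIcc, Set.mem_Icc] at hx
    exact le_trans (le_min hc hd) hx.1
  have hint : ∀ c d : ℝ, 0 ≤ c → 0 ≤ d → IntervalIntegrable (pf α τ) volume c d :=
    fun c d hc hd => ((pf_continuousOn hα0 hτ).mono (hsub c d hc hd)).intervalIntegrable
  -- (A) n*Ω ≥ ∫ pf²
  have hA : (∫ x in (1:ℝ)..b, pf α τ x ^ 2) ≤ n * Ω := by
    rw [hΩ']
    have := AntitoneOn.integral_le_sum (x₀ := 1) (a := p)
      (f := fun x => pf α τ x ^ 2)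
      ((pf_sq_anti hα0 hτ).mono (fun x hx => le_trans zero_le_one hx.1))
    exact this
  -- (B) n ≤ 1 + ∫ pf
  have hB : n ≤ 1 + ∫ x in (1:ℝ)..b, pf α τ x := by
    have hpp : p = (p - 1) + 1 := (Nat.succ_pred_eq_of_pos hp).symm
    have hsplit : ∑ i ∈ Finset.range p, pf α τ (1 + (i:ℝ))
        = (∑ i ∈ Finset.range (p-1), pf α τ (1 + ((i + 1 : ℕ):ℝ)))
          + pf α τ (1 + ((0:ℕ):ℝ)) := by
      conv_lhs => rw [hpp]
      rw [Finset.sum_range_succ']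
    have hstep := AntitoneOn.sum_le_integral (x₀ := 1) (a := p - 1)
      (f := pf α τ) ((pf_anti hα0 hτ).mono (fun x hx => le_trans zero_le_one hx.1))
    have hcast : (1 : ℝ) + ((p - 1 : ℕ) : ℝ) = (p : ℝ) := by
      have : ((p - 1 : ℕ) : ℝ) = (p:ℝ) - 1 := by
        push_cast [Nat.cast_sub hp]; ring
      rw [this]; ring
    have htail : (∫ x in (1:ℝ)..(p:ℝ), pf α τ x) ≤ ∫ x in (1:ℝ)..b, pf α τ x := by
      have hadj := intervalIntegral.integral_add_adjacent_intervals
        (hint 1 (p:ℝ) zero_le_one hp0.le) (hint (p:ℝ) b hp0.le (by linarith))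
      have hnn : 0 ≤ ∫ x in (p:ℝ)..b, pf α τ x := by
        apply intervalIntegral.integral_nonneg (by simp [hbdef])
        exact fun x hx => pf_nonneg hτ (le_trans hp0.le hx.1)
      linarith [hadj]
    have hf1 : pf α τ (1 + ((0:ℕ):ℝ)) ≤ 1 :=
      pf_le_one (α := α) hτ (by norm_num)
    calc n = _ := hsum'.symm
      _ = _ := hsplit
      _ ≤ (∫ x in (1:ℝ)..(1 + ((p-1:ℕ):ℝ)), pf α τ x) + 1 := add_le_add hstep hf1
      _ = (∫ x in (1:ℝ)..(p:ℝ), pf α τ x) + 1 := by rw [hcast]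
      _ ≤ _ := by linarith [htail]
  -- (C) the FTC identity
  have hC := integral_identity (τ := τ) hα hτ hb
  -- assemble
  have hFb : 0 ≤ b / (1 + τ * b ^ α) :=
    div_nonneg (by linarith) (denom_pos hτ (by linarith)).le
  have h1τ : 1 / (1 + τ) ≤ 1 := by
    rw [div_le_one (by linarith)]; linarith
  have hI1 : n - 1 ≤ ∫ x in (1:ℝ)..b, pf α τ x := by linarith
  have key : (α - 1) * n - α ≤ α * (n * Ω) := by nlinarith [hC, hA, hI1, hFb, h1τ]
  -- positivity of the dropped power term
  have hXpos : (0:ℝ) < ((n + 1 + ((p : ℝ) + 1) / (α - 1)) / ((p : ℝ) + 1)) ^ (2 * α - 1) := by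
    apply Real.rpow_pos_of_pos
    positivity
  have hmain : (α - 1) / α - 1 / n ≤ Ω := by
    have he : α * n * ((α - 1) / α - 1 / n) = (α - 1) * n - α := by
      field_simp
    have h2 : α * n * ((α - 1) / α - 1 / n) ≤ α * n * Ω := by
      rw [he]; nlinarith [key]
    exact le_of_mul_le_mul_left h2 (mul_pos hα0 hn0)
  have hpow : 0 < (1 / α) * ((n + 1 + ((p : ℝ) + 1) / (α - 1)) / ((p : ℝ) + 1)) ^ (2 * α - 1) := by
    positivity
  linarith
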